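/- Let Ω ⊂ ℝ^N be a bounded Lipschitz domain, s ∈ L^∞(Ω) nonnegative, and define β⁻ : H¹_D → H¹_D by (β⁻(u), φ) = −∫_Ω s u⁻ φ dΩ. Then for all u₀, h ∈ H¹_D: lim_{t→0} (1/t)(β⁻(u₀ + th) − β⁻(u₀), u₀) = (β⁻(u₀), h). -/

import Mathlib

open MeasureTheory Filter Topology
open scoped RealInnerProductSpace ENNReal

lemma key_lim' (A B : ℝ) :
    Tendsto (fun t : ℝ => t⁻¹ * ((max (-A) 0 - max (-(A + t * B)) 0) * A)) (𝓝[≠] 0)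
      (𝓝 (-(max (-A) 0 * B))) := by
  rcases eq_or_ne A 0 with rfl | hA
  · simpa using tendsto_const_nhds.congr (fun t : ℝ => by ring_nf)
  · have h1 : Tendsto (fun t : ℝ => |t| * |B|) (𝓝 0) (𝓝 0) := by
      simpa using ((continuous_abs.tendsto 0).mul_const |B|)
    have h2 : ∀ᶠ t : ℝ in 𝓝 0, |t| * |B| < |A| := h1.eventually_lt_const (abs_pos.mpr hA)
    have h3 : ∀ᶠ t : ℝ in 𝓝[≠] 0,
        t⁻¹ * ((max (-A) 0 - max (-(A + t * B)) 0) * A) = -(max (-A) 0 * B) := by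
      filter_upwards [nhdsWithin_le_nhds h2, self_mem_nhdsWithin] with t ht ht0
      have ht0' : t ≠ 0 := ht0
      have htB : |t * B| < |A| := by rwa [abs_mul]
      obtain ⟨hl, hr⟩ := abs_lt.mp htB
      rcases lt_or_gt_of_ne hA with hneg | hpos
      · rw [abs_of_neg hneg] at hl hr
        have h4 : A + t * B < 0 := by linarith
        rw [max_eq_left (by linarith : (0:ℝ) ≤ -A),
          max_eq_left (by linarith : (0:ℝ) ≤ -(A + t*B))]
        field_simp
        ring
      · rw [abs_of_pos hpos] at hl hr
        have h4 : 0 < A + t * B := by linarith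
        rw [max_eq_right (by linarith : -A ≤ 0), max_eq_right (by linarith : -(A + t*B) ≤ 0)]
        simp
    exact tendsto_const_nhds.congr' (EventuallyEq.symm h3)

/-- Directional limit condition for `β⁻` defined by `(β⁻ u, φ) = −∫ s u⁻ φ`:
for all `u₀, h ∈ H¹_D`,
`lim_{t→0} (1/t)(β⁻(u₀ + t h) − β⁻(u₀), u₀) = (β⁻(u₀), h)`. -/
theorem stmt_17 {N : ℕ} (Ω : Set (EuclideanSpace ℝ (Fin N)))
    (hΩb : Bornology.IsBounded Ω) (hΩm : MeasurableSet Ω)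
    (μ : Measure (EuclideanSpace ℝ (Fin N))) (hμ : μ = volume.restrict Ω)
    {H : Type*} [NormedAddCommGroup H] [InnerProductSpace ℝ H] [CompleteSpace H]
    (s : Lp ℝ ∞ μ) (hs : 0 ≤ s)
    (V : H →L[ℝ] Lp ℝ 2 μ)
    (βm : H → H)
    (hβm : ∀ u φ : H, ⟪βm u, φ⟫ =
      -∫ x, (s : EuclideanSpace ℝ (Fin N) → ℝ) x
          * max (-(V u : EuclideanSpace ℝ (Fin N) → ℝ) x) 0
          * (V φ : EuclideanSpace ℝ (Fin N) → ℝ) x ∂μ) :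
    ∀ u₀ h : H,
      Tendsto (fun t : ℝ => t⁻¹ * ⟪βm (u₀ + t • h) - βm u₀, u₀⟫) (𝓝[≠] 0)
        (𝓝 ⟪βm u₀, h⟫) := by
  intro u₀ h
  set α := EuclideanSpace ℝ (Fin N)
  set S : α → ℝ := (s : α → ℝ) with hSdef
  set a : α → ℝ := (V u₀ : α → ℝ) with hadef
  set b : α → ℝ := (V h : α → ℝ) with hbdef
  -- essential bound on S
  set C : ℝ := (eLpNormEssSup S μ).toReal with hCdef
  have hStop : eLpNormEssSup S μ < ⊤ := by
    have := Lp.eLpNorm_lt_top s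
    rwa [eLpNorm_exponent_top] at this
  have hSC : ∀ᵐ x ∂μ, ‖S x‖ ≤ C := by
    filter_upwards [ae_le_eLpNormEssSup (f := S) (μ := μ)] with x hx
    have : (‖S x‖₊ : ℝ≥0∞).toReal ≤ (eLpNormEssSup S μ).toReal :=
      ENNReal.toReal_mono hStop.ne hx
    simpa using this
  have hC0 : 0 ≤ C := ENNReal.toReal_nonneg
  -- measurability
  have mS : AEMeasurable S μ := (Lp.aestronglyMeasurable s).aemeasurable
  have mA : AEMeasurable a μ := (Lp.aestronglyMeasurable (V u₀)).aemeasurable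
  have mB : AEMeasurable b μ := (Lp.aestronglyMeasurable (V h)).aemeasurable
  -- integrable products of L² functions
  have hmul : ∀ g₁ g₂ : Lp ℝ 2 μ, Integrable (fun x => (g₁ : α → ℝ) x * (g₂ : α → ℝ) x) μ := by
    intro g₁ g₂
    have := L2.integrable_inner (𝕜 := ℝ) g₂ g₁
    simpa [RCLike.inner_apply, conj_trivial] using this
  -- integrability of the integrands in hβm
  have hint : ∀ g : Lp ℝ 2 μ, ∀ g₂ : Lp ℝ 2 μ,
      Integrable (fun x => S x * max (-(g : α → ℝ) x) 0 * (g₂ : α → ℝ) x) μ := by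
    intro g g₂
    have h1 : Integrable (fun x => max (-(g : α → ℝ) x) 0 * (g₂ : α → ℝ) x) μ := by
      refine Integrable.mono' (hmul g g₂).abs
        (((((Lp.aestronglyMeasurable g).aemeasurable.neg).max aemeasurable_const).mul
          (Lp.aestronglyMeasurable g₂).aemeasurable).aestronglyMeasurable)
        (Eventually.of_forall fun x => ?_)
      have hmax : |max (-(g : α → ℝ) x) 0| ≤ |(g : α → ℝ) x| := by
        have := abs_max_sub_max_le_abs (-(g : α → ℝ) x) 0 0
        simpa using this
      calc ‖max (-(g : α → ℝ) x) 0 * (g₂ : α → ℝ) x‖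
          = |max (-(g : α → ℝ) x) 0| * |(g₂ : α → ℝ) x| := abs_mul _ _
        _ ≤ |(g : α → ℝ) x| * |(g₂ : α → ℝ) x| :=
            mul_le_mul_of_nonneg_right hmax (abs_nonneg _)
        _ = |(g : α → ℝ) x * (g₂ : α → ℝ) x| := (abs_mul _ _).symm
    have := h1.bdd_mul (Lp.aestronglyMeasurable s) hSC
    simpa [mul_assoc] using this
  -- the family of integrands
  set F : ℝ → α → ℝ :=
    fun t x => t⁻¹ * ((max (-(a x)) 0 - max (-(a x + t * b x)) 0) * a x) * S x with hFdef
  set f : α → ℝ := fun x => -(max (-(a x)) 0 * b x) * S x with hfdef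
  -- eventual equality with ∫ F t
  have heq : ∀ᶠ t : ℝ in 𝓝[≠] 0,
      t⁻¹ * ⟪βm (u₀ + t • h) - βm u₀, u₀⟫ = ∫ x, F t x ∂μ := by
    refine Eventually.of_forall fun t => ?_
    have hw : ((V (u₀ + t • h) : Lp ℝ 2 μ) : α → ℝ) =ᵐ[μ] fun x => a x + t * b x := by
      have h1 : V (u₀ + t • h) = V u₀ + t • V h := by
        rw [map_add]; rw [ContinuousLinearMap.map_smul]
      rw [h1]
      filter_upwards [Lp.coeFn_add (V u₀) (t • V h), Lp.coeFn_smul t (V h)] with x hx1 hx2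
      rw [hx1, Pi.add_apply, hx2, Pi.smul_apply, smul_eq_mul]
    have hI1 : ∫ x, S x * max (-((V (u₀ + t • h) : Lp ℝ 2 μ) : α → ℝ) x) 0 * a x ∂μ
        = ∫ x, S x * max (-(a x + t * b x)) 0 * a x ∂μ := by
      refine integral_congr_ae (hw.mono fun x hx => ?_)
      simp only [hx]
    have hint1 : Integrable (fun x => S x * max (-(a x + t * b x)) 0 * a x) μ := by
      have := hint (V (u₀ + t • h)) (V u₀)
      refine this.congr (hw.mono fun x hx => ?_)
      simp only [hx]; rfl
    have hint2 : Integrable (fun x => S x * max (-(a x)) 0 * a x) μ := hint (V u₀) (V u₀)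
    rw [inner_sub_left, hβm, hβm, hI1]
    rw [show -∫ x, S x * max (-(a x + t * b x)) 0 * a x ∂μ -
          -∫ x, S x * max (-(a x)) 0 * a x ∂μ
        = ∫ x, (S x * max (-(a x)) 0 * a x - S x * max (-(a x + t * b x)) 0 * a x) ∂μ by
      rw [integral_sub hint2 hint1]; ring]
    rw [← integral_const_mul]
    refine integral_congr_ae (Eventually.of_forall fun x => ?_)
    simp only [hFdef]
    ring
  -- final value
  have hval : ⟪βm u₀, h⟫ = ∫ x, f x ∂μ := by
    rw [hβm]
    rw [show (fun x => f x) = fun x => -(S x * max (-(a x)) 0 * b x) by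
      funext x; simp only [hfdef]; ring]
    rw [integral_neg]
  rw [hval]
  refine Tendsto.congr' (heq.mono fun t ht => ht.symm) ?_
  -- dominated convergence
  refine tendsto_integral_filter_of_dominated_convergence
    (fun x => C * (|a x| * |b x|)) ?_ ?_ ?_ ?_
  · refine Eventually.of_forall fun t => ?_
    exact (((((mA.neg.max aemeasurable_const).sub
      ((mA.add (aemeasurable_const.mul mB)).neg.max aemeasurable_const)).mul mA).const_mul
      t⁻¹).mul mS).aestronglyMeasurable
  · filter_upwards [self_mem_nhdsWithin] with t ht
    have ht0 : t ≠ 0 := ht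
    filter_upwards [hSC] with x hx
    have hD : |max (-(a x)) 0 - max (-(a x + t * b x)) 0| ≤ |t * b x| := by
      have hD1 := abs_max_sub_max_le_abs (-(a x)) (-(a x + t * b x)) 0
      have e : -(a x) - -(a x + t * b x) = t * b x := by ring
      rwa [e] at hD1
    have habs : ‖F t x‖
        = |t|⁻¹ * (|max (-(a x)) 0 - max (-(a x + t * b x)) 0| * |a x|) * |S x| := by
      show |t⁻¹ * ((max (-(a x)) 0 - max (-(a x + t * b x)) 0) * a x) * S x| = _
      rw [abs_mul, abs_mul, abs_mul, abs_inv]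
    rw [habs]
    calc |t|⁻¹ * (|max (-(a x)) 0 - max (-(a x + t * b x)) 0| * |a x|) * |S x|
        ≤ |t|⁻¹ * (|t * b x| * |a x|) * C := by
          have h0 : (0:ℝ) ≤ |t|⁻¹ := inv_nonneg.mpr (abs_nonneg t)
          have hx' : |S x| ≤ C := by simpa using (show ‖S x‖ ≤ C from hx)
          gcongr
      _ = C * (|a x| * |b x|) := by
          have habst : |t| ≠ 0 := abs_ne_zero.mpr ht0
          rw [abs_mul]
          field_simp
  · have h1 : Integrable (fun x => |a x * b x|) μ := (hmul (V u₀) (V h)).abs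
    have h2 : Integrable (fun x => |a x| * |b x|) μ := by
      refine h1.congr (Eventually.of_forall fun x => ?_)
      simp only [abs_mul]
    exact h2.const_mul C
  · refine Eventually.of_forall fun x => ?_
    exact (key_lim' (a x) (b x)).mul_const (S x)
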